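/- For the two-dimensional linear elementary cellular automaton T_0 with rule (Tu)_{i,j} = u_{i+1,j} + u_{i−1,j} + u_{i,j+1} + u_{i,j−1} (mod 2), starting from the single site seed, the number of nonzero states at time n equals 4^(s₂(n)), where s₂(n) is the binary digit sum of n, and the cumulative number of nonzero states from time 0 to 2^k − 1 equals 5^k. -/

import Mathlib

/-- The 2D linear elementary CA `T₀`:
`(Tu)_{i,j} = u_{i+1,j} + u_{i-1,j} + u_{i,j+1} + u_{i,j-1}` mod 2. -/
def caT0 (u : ℤ × ℤ → ZMod 2) : ℤ × ℤ → ZMod 2 :=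
  fun p => u (p.1 + 1, p.2) + u (p.1 - 1, p.2) + u (p.1, p.2 + 1) + u (p.1, p.2 - 1)

/-- The single site seed on `ℤ²`. -/
def seed2 : ℤ × ℤ → ZMod 2 := fun p => if p = (0, 0) then 1 else 0

set_option linter.unreachableTactic false
set_option linter.unusedTactic false

open Finsupp
abbrev A2 : Type := AddMonoidAlgebra (ZMod 2) (ℤ × ℤ)
instance : CoeFun A2 (fun _ => ℤ × ℤ → ZMod 2) := ⟨fun f => f.coeff⟩
noncomputable def tA : A2 := AddMonoidAlgebra.single (1,0) 1 + AddMonoidAlgebra.single (-1,0) 1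
  + AddMonoidAlgebra.single (0,1) 1 + AddMonoidAlgebra.single (0,-1) 1

lemma a2_add_apply (x y : A2) (p : ℤ × ℤ) : (x + y) p = x p + y p := rfl

lemma tA_mul_apply (f : A2) (p : ℤ × ℤ) :
    (tA * f) p = f ((-1,0) + p) + f ((1,0) + p) + f ((0,-1) + p) + f ((0,1) + p) := by
  simp [tA, add_mul, AddMonoidAlgebra.coeff_single_mul_apply, a2_add_apply]

lemma a2_add_self (x : A2) : x + x = 0 := by
  ext a; rw [a2_add_apply]; exact CharTwo.add_self_eq_zero _

lemma a2_sq (f : A2) : f * f = AddMonoidAlgebra.mapDomain (fun a => a + a) f := by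
  induction f using AddMonoidAlgebra.induction with
  | zero => show (0 : A2) * 0 = _; simp
  | single_add a b g ha hb ih =>
    set s : A2 := AddMonoidAlgebra.single a b with hs
    set G : A2 := g with hG
    have hbb : ∀ c : ZMod 2, c * c = c := by decide
    show (s + G) * (s + G) = AddMonoidAlgebra.mapDomain (fun a => a + a) (s + G)
    have hcross : s * G + G * s = 0 := by rw [mul_comm]; exact a2_add_self _
    have hexp : (s + G) * (s + G) = s * s + G * G + (s * G + G * s) := by ring
    rw [hexp, hcross, add_zero, AddMonoidAlgebra.mapDomain_add]
    have hss : s * s = AddMonoidAlgebra.single (a + a) b := by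
      rw [hs]
      exact (AddMonoidAlgebra.single_mul_single a a b b).trans (by rw [hbb])
    rw [hss]
    have : (AddMonoidAlgebra.mapDomain (fun a => a + a) s : A2) = AddMonoidAlgebra.single (a+a) b := by
      rw [hs]; exact AddMonoidAlgebra.mapDomain_single
    rw [this]
    exact congrArg _ ih

lemma tA_parity (n : ℕ) : ∀ p ∈ (tA ^ n).coeff.support, (2 : ℤ) ∣ (p.1 + p.2 - n) := by
  induction n with
  | zero =>
    intro p hp
    have : (tA ^ 0 : A2) = AddMonoidAlgebra.single 0 1 := by
      rw [pow_zero]; rfl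
    rw [this] at hp
    have := Finsupp.support_single_subset hp
    simp only [Finset.mem_singleton] at this
    subst this
    simp
  | succ n ih =>
    intro p hp
    rw [Finsupp.mem_support_iff] at hp
    rw [pow_succ, mul_comm, tA_mul_apply] at hp
    have : (tA ^ n) ((-1,0) + p) ≠ 0 ∨ (tA ^ n) ((1,0) + p) ≠ 0 ∨
        (tA ^ n) ((0,-1) + p) ≠ 0 ∨ (tA ^ n) ((0,1) + p) ≠ 0 := by
      by_contra h
      push_neg at h
      rw [h.1, h.2.1, h.2.2.1, h.2.2.2] at hp
      simp at hp
    rcases this with h | h | h | h <;>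
    · have := ih _ (Finsupp.mem_support_iff.mpr h)
      simp only [Prod.fst_add, Prod.snd_add] at this
      push_cast [Nat.cast_succ] at this ⊢
      omega

lemma dbl_inj : Function.Injective (fun a : ℤ × ℤ => a + a) := by
  intro a b h
  rw [Prod.ext_iff] at h ⊢
  simp only [Prod.fst_add, Prod.snd_add] at h
  omega

lemma a2_sq_support (f : A2) : (f * f).coeff.support = f.coeff.support.image (fun a => a + a) := by
  rw [a2_sq]
  classical
  exact Finsupp.mapDomain_support_of_injective dbl_inj f.coeff

lemma count4 (g : A2)
    (hev : ∀ q ∈ g.coeff.support, (2:ℤ) ∣ q.1)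
    (h4 : ∀ q1 ∈ g.coeff.support, ∀ q2 ∈ g.coeff.support, (4:ℤ) ∣ (q1.1 + q1.2) - (q2.1 + q2.2)) :
    (tA * g).coeff.support.card = 4 * g.coeff.support.card := by
  classical
  have key : ∀ d1 d2 : ℤ × ℤ,
      (d1 = (1,0) ∨ d1 = (-1,0) ∨ d1 = (0,1) ∨ d1 = (0,-1)) →
      (d2 = (1,0) ∨ d2 = (-1,0) ∨ d2 = (0,1) ∨ d2 = (0,-1)) →
      ∀ q1 ∈ g.coeff.support, ∀ q2 ∈ g.coeff.support, q1 + d1 = q2 + d2 → d1 = d2 := by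
    intro d1 d2 hd1 hd2 q1 hq1 q2 hq2 heq
    have e1 := hev q1 hq1
    have e2 := hev q2 hq2
    have e4 := h4 q1 hq1 q2 hq2
    rw [Prod.ext_iff] at heq
    simp only [Prod.fst_add, Prod.snd_add] at heq
    rcases hd1 with rfl|rfl|rfl|rfl <;> rcases hd2 with rfl|rfl|rfl|rfl <;>
      first
        | rfl
        | (exfalso; simp only [Prod.fst, Prod.snd] at heq; omega)
  have uniq : ∀ p : ℤ × ℤ, ∀ d1 d2 : ℤ × ℤ,
      (d1 = (1,0) ∨ d1 = (-1,0) ∨ d1 = (0,1) ∨ d1 = (0,-1)) →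
      (d2 = (1,0) ∨ d2 = (-1,0) ∨ d2 = (0,1) ∨ d2 = (0,-1)) →
      d1 ≠ d2 → g (-d1 + p) ≠ 0 → g (-d2 + p) ≠ 0 → False := by
    intro p d1 d2 hd1 hd2 hne h1 h2
    refine hne (key d1 d2 hd1 hd2 (-d1 + p) (Finsupp.mem_support_iff.mpr h1)
      (-d2 + p) (Finsupp.mem_support_iff.mpr h2) ?_)
    abel
  have hsupp : (tA * g).coeff.support =
      ((g.coeff.support.image (· + ((1,0) : ℤ × ℤ)) ∪ g.coeff.support.image (· + (-1,0)))
        ∪ g.coeff.support.image (· + (0,1))) ∪ g.coeff.support.image (· + (0,-1)) := by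
    ext p
    simp only [Finsupp.mem_support_iff, Finset.mem_union, Finset.mem_image]
    constructor
    · intro hp
      rw [tA_mul_apply] at hp
      have : g ((-1,0) + p) ≠ 0 ∨ g ((1,0) + p) ≠ 0 ∨ g ((0,-1) + p) ≠ 0 ∨ g ((0,1) + p) ≠ 0 := by
        by_contra h
        push_neg at h
        rw [h.1, h.2.1, h.2.2.1, h.2.2.2] at hp
        simp at hp
      rcases this with h | h | h | h
      · exact Or.inl (Or.inl (Or.inl ⟨_, h, by simp [Prod.ext_iff] <;> omega⟩))
      · exact Or.inl (Or.inl (Or.inr ⟨_, h, by simp [Prod.ext_iff] <;> omega⟩))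
      · exact Or.inl (Or.inr ⟨_, h, by simp [Prod.ext_iff] <;> omega⟩)
      · exact Or.inr ⟨_, h, by simp [Prod.ext_iff] <;> omega⟩
    · intro hp
      rw [tA_mul_apply]
      rcases hp with ((⟨q, hq, rfl⟩ | ⟨q, hq, rfl⟩) | ⟨q, hq, rfl⟩) | ⟨q, hq, rfl⟩
      · have h1 : g ((-1,0) + (q + (1,0))) ≠ 0 := by
          rw [show (-1,0) + (q + (1,0)) = q by simp [Prod.ext_iff] <;> omega]; exact hq
        have z2 : g ((1,0) + (q + (1,0))) = 0 := by
          by_contra h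
          exact uniq _ (1,0) (-1,0) (by tauto) (by tauto) (by decide)
            (by rwa [show -((1,0):ℤ×ℤ) = (-1,0) from rfl]) (by rwa [show -((-1,0):ℤ×ℤ) = (1,0) from rfl])
        have z3 : g ((0,-1) + (q + (1,0))) = 0 := by
          by_contra h
          exact uniq _ (1,0) (0,1) (by tauto) (by tauto) (by decide)
            (by rwa [show -((1,0):ℤ×ℤ) = (-1,0) from rfl]) (by rwa [show -((0,1):ℤ×ℤ) = (0,-1) from rfl])
        have z4 : g ((0,1) + (q + (1,0))) = 0 := by
          by_contra h
          exact uniq _ (1,0) (0,-1) (by tauto) (by tauto) (by decide)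
            (by rwa [show -((1,0):ℤ×ℤ) = (-1,0) from rfl]) (by rwa [show -((0,-1):ℤ×ℤ) = (0,1) from rfl])
        simpa [z2, z3, z4] using h1
      · have h1 : g ((1,0) + (q + (-1,0))) ≠ 0 := by
          rw [show (1,0) + (q + (-1,0)) = q by simp [Prod.ext_iff] <;> omega]; exact hq
        have z2 : g ((-1,0) + (q + (-1,0))) = 0 := by
          by_contra h
          exact uniq _ (-1,0) (1,0) (by tauto) (by tauto) (by decide)
            (by rwa [show -((-1,0):ℤ×ℤ) = (1,0) from rfl]) (by rwa [show -((1,0):ℤ×ℤ) = (-1,0) from rfl])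
        have z3 : g ((0,-1) + (q + (-1,0))) = 0 := by
          by_contra h
          exact uniq _ (-1,0) (0,1) (by tauto) (by tauto) (by decide)
            (by rwa [show -((-1,0):ℤ×ℤ) = (1,0) from rfl]) (by rwa [show -((0,1):ℤ×ℤ) = (0,-1) from rfl])
        have z4 : g ((0,1) + (q + (-1,0))) = 0 := by
          by_contra h
          exact uniq _ (-1,0) (0,-1) (by tauto) (by tauto) (by decide)
            (by rwa [show -((-1,0):ℤ×ℤ) = (1,0) from rfl]) (by rwa [show -((0,-1):ℤ×ℤ) = (0,1) from rfl])
        simpa [z2, z3, z4] using h1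
      · have h1 : g ((0,-1) + (q + (0,1))) ≠ 0 := by
          rw [show (0,-1) + (q + (0,1)) = q by simp [Prod.ext_iff] <;> omega]; exact hq
        have z2 : g ((-1,0) + (q + (0,1))) = 0 := by
          by_contra h
          exact uniq _ (0,1) (1,0) (by tauto) (by tauto) (by decide)
            (by rwa [show -((0,1):ℤ×ℤ) = (0,-1) from rfl]) (by rwa [show -((1,0):ℤ×ℤ) = (-1,0) from rfl])
        have z3 : g ((1,0) + (q + (0,1))) = 0 := by
          by_contra h
          exact uniq _ (0,1) (-1,0) (by tauto) (by tauto) (by decide)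
            (by rwa [show -((0,1):ℤ×ℤ) = (0,-1) from rfl]) (by rwa [show -((-1,0):ℤ×ℤ) = (1,0) from rfl])
        have z4 : g ((0,1) + (q + (0,1))) = 0 := by
          by_contra h
          exact uniq _ (0,1) (0,-1) (by tauto) (by tauto) (by decide)
            (by rwa [show -((0,1):ℤ×ℤ) = (0,-1) from rfl]) (by rwa [show -((0,-1):ℤ×ℤ) = (0,1) from rfl])
        simpa [z2, z3, z4] using h1
      · have h1 : g ((0,1) + (q + (0,-1))) ≠ 0 := by
          rw [show (0,1) + (q + (0,-1)) = q by simp [Prod.ext_iff] <;> omega]; exact hq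
        have z2 : g ((-1,0) + (q + (0,-1))) = 0 := by
          by_contra h
          exact uniq _ (0,-1) (1,0) (by tauto) (by tauto) (by decide)
            (by rwa [show -((0,-1):ℤ×ℤ) = (0,1) from rfl]) (by rwa [show -((1,0):ℤ×ℤ) = (-1,0) from rfl])
        have z3 : g ((1,0) + (q + (0,-1))) = 0 := by
          by_contra h
          exact uniq _ (0,-1) (-1,0) (by tauto) (by tauto) (by decide)
            (by rwa [show -((0,-1):ℤ×ℤ) = (0,1) from rfl]) (by rwa [show -((-1,0):ℤ×ℤ) = (1,0) from rfl])
        have z4 : g ((0,-1) + (q + (0,-1))) = 0 := by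
          by_contra h
          exact uniq _ (0,-1) (0,1) (by tauto) (by tauto) (by decide)
            (by rwa [show -((0,-1):ℤ×ℤ) = (0,1) from rfl]) (by rwa [show -((0,1):ℤ×ℤ) = (0,-1) from rfl])
        simpa [z2, z3, z4] using h1
  have himcard : ∀ d : ℤ × ℤ, (g.coeff.support.image (· + d)).card = g.coeff.support.card := by
    intro d
    exact Finset.card_image_of_injective _ (add_left_injective d)
  have hdisj : ∀ d1 d2 : ℤ × ℤ,
      (d1 = (1,0) ∨ d1 = (-1,0) ∨ d1 = (0,1) ∨ d1 = (0,-1)) →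
      (d2 = (1,0) ∨ d2 = (-1,0) ∨ d2 = (0,1) ∨ d2 = (0,-1)) →
      d1 ≠ d2 → Disjoint (g.coeff.support.image (· + d1)) (g.coeff.support.image (· + d2)) := by
    intro d1 d2 hd1 hd2 hne
    rw [Finset.disjoint_left]
    intro p hp1 hp2
    rw [Finset.mem_image] at hp1 hp2
    obtain ⟨q1, hq1, he1⟩ := hp1
    obtain ⟨q2, hq2, he2⟩ := hp2
    exact hne (key d1 d2 hd1 hd2 q1 hq1 q2 hq2 (he1.trans he2.symm))
  rw [hsupp]
  rw [Finset.card_union_of_disjoint, Finset.card_union_of_disjoint, Finset.card_union_of_disjoint]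
  · simp only [himcard]; ring
  · exact hdisj _ _ (by tauto) (by tauto) (by decide)
  · rw [Finset.disjoint_union_left]
    exact ⟨hdisj _ _ (by tauto) (by tauto) (by decide), hdisj _ _ (by tauto) (by tauto) (by decide)⟩
  · rw [Finset.disjoint_union_left, Finset.disjoint_union_left]
    exact ⟨⟨hdisj _ _ (by tauto) (by tauto) (by decide), hdisj _ _ (by tauto) (by tauto) (by decide)⟩,
      hdisj _ _ (by tauto) (by tauto) (by decide)⟩

lemma s2_even (m : ℕ) : (Nat.digits 2 (2 * m)).sum = (Nat.digits 2 m).sum := by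
  rcases Nat.eq_zero_or_pos m with rfl | hm
  · simp
  · rw [Nat.digits_def' (by norm_num : 1 < 2) (by omega)]
    simp [Nat.mul_div_cancel_left _ (by norm_num : 0 < 2), Nat.mul_mod_right]

lemma s2_odd (m : ℕ) : (Nat.digits 2 (2 * m + 1)).sum = (Nat.digits 2 m).sum + 1 := by
  rw [Nat.digits_def' (by norm_num : 1 < 2) (by omega)]
  have h1 : (2 * m + 1) % 2 = 1 := by omega
  have h2 : (2 * m + 1) / 2 = m := by omega
  rw [h1, h2]
  simp [Nat.add_comm]

lemma card_pow (n : ℕ) : (tA ^ n).coeff.support.card = 4 ^ (Nat.digits 2 n).sum := by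
  induction n using Nat.strong_induction_on with
  | _ n ih =>
    rcases Nat.eq_zero_or_pos n with rfl | hn
    · have h1 : (tA ^ 0 : A2) = AddMonoidAlgebra.single 0 1 := by rw [pow_zero]; rfl
      rw [h1]
      simp [Finsupp.support_single_ne_zero]
    rcases Nat.even_or_odd n with ⟨m, hm⟩ | ⟨m, hm⟩
    · -- n = 2m, m > 0
      have hmn : m < n := by omega
      have hpow : tA ^ n = tA ^ m * tA ^ m := by rw [hm, pow_add]
      have : (tA ^ n).coeff.support.card = (tA ^ m).coeff.support.card := by
        rw [hpow, a2_sq_support, Finset.card_image_of_injective _ dbl_inj]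
      rw [this, ih m hmn, show n = 2 * m by omega, s2_even]
    · -- n = 2m + 1
      have hg : tA ^ n = tA * tA ^ (2 * m) := by
        rw [hm, pow_succ, mul_comm]
      have hsq : tA ^ (2 * m) = tA ^ m * tA ^ m := by rw [two_mul, pow_add]
      have hmem : ∀ q ∈ (tA ^ (2 * m)).coeff.support, ∃ a ∈ (tA ^ m).coeff.support, q = a + a := by
        intro q hq
        rw [hsq, a2_sq_support, Finset.mem_image] at hq
        obtain ⟨a, ha, rfl⟩ := hq
        exact ⟨a, ha, rfl⟩
      have hev : ∀ q ∈ (tA ^ (2 * m)).coeff.support, (2:ℤ) ∣ q.1 := by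
        intro q hq
        obtain ⟨a, _, rfl⟩ := hmem q hq
        simp only [Prod.fst_add]
        omega
      have h4 : ∀ q1 ∈ (tA ^ (2 * m)).coeff.support, ∀ q2 ∈ (tA ^ (2 * m)).coeff.support,
          (4:ℤ) ∣ (q1.1 + q1.2) - (q2.1 + q2.2) := by
        intro q1 hq1 q2 hq2
        obtain ⟨a, ha, rfl⟩ := hmem q1 hq1
        obtain ⟨b, hb, rfl⟩ := hmem q2 hq2
        have pa := tA_parity m a ha
        have pb := tA_parity m b hb
        simp only [Prod.fst_add, Prod.snd_add]
        omega
      have hc : (tA ^ n).coeff.support.card = 4 * (tA ^ (2 * m)).coeff.support.card := by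
        rw [hg]; exact count4 _ hev h4
      have hc2 : (tA ^ (2 * m)).coeff.support.card = (tA ^ m).coeff.support.card := by
        rw [hsq, a2_sq_support, Finset.card_image_of_injective _ dbl_inj]
      rw [hc, hc2, ih m (by omega)]
      have hsn : (Nat.digits 2 n).sum = (Nat.digits 2 m).sum + 1 := by
        rw [hm]; exact s2_odd m
      rw [hsn, pow_succ]
      ring

lemma s2_pow_add : ∀ k r : ℕ, r < 2 ^ k →
    (Nat.digits 2 (2 ^ k + r)).sum = (Nat.digits 2 r).sum + 1 := by
  intro k
  induction k with
  | zero =>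
    intro r hr
    interval_cases r
    simp
  | succ k ih =>
    intro r hr
    have hq : r / 2 < 2 ^ k := by omega
    rcases Nat.mod_two_eq_zero_or_one r with h | h
    · have hr2 : r = 2 * (r / 2) := by omega
      have : 2 ^ (k + 1) + r = 2 * (2 ^ k + r / 2) := by rw [pow_succ]; omega
      rw [this, s2_even, ih _ hq]
      conv_rhs => rw [hr2, s2_even]
    · have hr2 : r = 2 * (r / 2) + 1 := by omega
      have : 2 ^ (k + 1) + r = 2 * (2 ^ k + r / 2) + 1 := by rw [pow_succ]; omega
      rw [this, s2_odd, ih _ hq]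
      conv_rhs => rw [hr2, s2_odd]

lemma seed2_eq : seed2 = ⇑(1 : A2) := by
  funext p
  rw [show (1 : A2) = AddMonoidAlgebra.single 0 1 from rfl]
  show (if p = (0, 0) then 1 else 0) = _
  classical
  rw [AddMonoidAlgebra.coeff_single_apply]
  by_cases hp : p = (0, 0)
  · rw [if_pos hp, if_pos (show (0 : ℤ × ℤ) = p by rw [hp]; rfl)]
  · rw [if_neg hp, if_neg (show ¬((0 : ℤ × ℤ) = p) from fun h => hp (by rw [← h]; rfl))]

lemma caT0_coe (f : A2) : caT0 ⇑f = ⇑(tA * f) := by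
  funext p
  rw [show (tA * f) p = _ from tA_mul_apply f p]
  have e1 : ((-1,0) : ℤ × ℤ) + p = (p.1 - 1, p.2) := by
    simp [Prod.ext_iff] <;> omega
  have e2 : ((1,0) : ℤ × ℤ) + p = (p.1 + 1, p.2) := by
    simp [Prod.ext_iff] <;> omega
  have e3 : ((0,-1) : ℤ × ℤ) + p = (p.1, p.2 - 1) := by
    simp [Prod.ext_iff] <;> omega
  have e4 : ((0,1) : ℤ × ℤ) + p = (p.1, p.2 + 1) := by
    simp [Prod.ext_iff] <;> omega
  rw [e1, e2, e3, e4]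
  simp only [caT0]
  ring

lemma iter_eq (n : ℕ) : caT0^[n] seed2 = ⇑(tA ^ n) := by
  induction n with
  | zero => simpa using seed2_eq
  | succ n ih =>
    rw [Function.iterate_succ_apply', ih, caT0_coe, ← pow_succ']

lemma sum_pow4 (k : ℕ) : ∑ n ∈ Finset.range (2 ^ k), 4 ^ (Nat.digits 2 n).sum = 5 ^ k := by
  induction k with
  | zero => simp
  | succ k ih =>
    have h2 : 2 ^ (k + 1) = 2 ^ k + 2 ^ k := by rw [pow_succ]; omega
    rw [h2, Finset.range_add, Finset.sum_union, Finset.sum_map]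
    · have hright : ∑ x ∈ Finset.range (2 ^ k),
          4 ^ (Nat.digits 2 (addLeftEmbedding (2 ^ k) x)).sum
          = ∑ x ∈ Finset.range (2 ^ k), 4 * 4 ^ (Nat.digits 2 x).sum := by
        refine Finset.sum_congr rfl ?_
        intro i hi
        rw [Finset.mem_range] at hi
        rw [addLeftEmbedding_apply, s2_pow_add k i hi, pow_succ]
        ring
      rw [hright, ← Finset.mul_sum, ih, pow_succ]
      ring
    · rw [Finset.disjoint_left]
      intro a ha hb
      rw [Finset.mem_range] at ha
      rw [Finset.mem_map] at hb
      obtain ⟨b, _, hbe⟩ := hb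
      rw [addLeftEmbedding_apply] at hbe
      omega


/-- For `T₀` from the single site seed, the number of nonzero states at time
`n` is `4^(s₂ n)`, and the cumulative number up to time `2^k - 1` is `5^k`. -/
theorem caT0_num_cum :
    (∀ n : ℕ, {p : ℤ × ℤ | (caT0^[n] seed2) p ≠ 0}.ncard = 4 ^ (Nat.digits 2 n).sum) ∧
    (∀ k : ℕ, ∑ n ∈ Finset.range (2 ^ k),
      {p : ℤ × ℤ | (caT0^[n] seed2) p ≠ 0}.ncard = 5 ^ k) := by
  have hset : ∀ n : ℕ, {p : ℤ × ℤ | (caT0^[n] seed2) p ≠ 0}.ncard = 4 ^ (Nat.digits 2 n).sum := by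
    intro n
    rw [iter_eq]
    have : {p : ℤ × ℤ | (tA ^ n) p ≠ 0} = ↑(tA ^ n).coeff.support := by
      ext p; simp [Finsupp.mem_support_iff]
    rw [this, Set.ncard_coe_finset, card_pow]
  refine ⟨hset, fun k => ?_⟩
  simp only [hset]
  exact sum_pow4 k
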